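/- Let π be a probability measure on E satisfying the partial balance equations P(X₁=n₁,Y>0)·λ₁ = P(X₁=n₁+1,Y>0)·μ for all n₁ ≥ 0, with λ₁ < μ and P(Y>0) > 0. Then the conditional distribution of X₁ given Y > 0 is geometric: P(X₁=n₁ | Y>0) = (1 - λ₁/μ)·(λ₁/μ)^{n₁} for all n₁ ∈ ℕ₀. -/

import Mathlib

theorem stmt_7 (b : ℕ) (lam1 mu : ℝ) (h1 : 0 < lam1) (hmu : 0 < mu)
    (hlm : lam1 < mu)
    (pi : ℕ → ℕ → ℕ → ℝ)
    (hnn : ∀ n₁ n₂ k, 0 ≤ pi n₁ n₂ k)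
    (hprob : ∑' z : ℕ × ℕ, ∑ k ∈ Finset.range (b + 1), pi z.1 z.2 k = 1)
    (hsum : Summable (fun z : ℕ × ℕ => ∑ k ∈ Finset.range (b + 1), pi z.1 z.2 k))
    -- P(X₁ = n, Y > 0) := Σ_{n₂ ≥ 0} Σ_{k=1}^{b} π(n, n₂, k)
    (P : ℕ → ℝ)
    (hP : ∀ n, P n = ∑' n₂ : ℕ, ∑ k ∈ Finset.Icc 1 b, pi n n₂ k)
    (hcut : ∀ n₁ : ℕ, P n₁ * lam1 = P (n₁ + 1) * mu)
    -- P(Y > 0) := Σ_{n₁ ≥ 0} P(X₁ = n₁, Y > 0), assumed positive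
    (PY : ℝ) (hPY : PY = ∑' n₁ : ℕ, P n₁) (hPYpos : 0 < PY) :
    ∀ n₁ : ℕ, P n₁ / PY = (1 - lam1 / mu) * (lam1 / mu) ^ n₁ := by
  set r := lam1 / mu with hr
  have hr0 : 0 ≤ r := div_nonneg h1.le hmu.le
  have hr1 : r < 1 := (div_lt_one hmu).mpr hlm
  have hgeo : ∀ n, P n = P 0 * r ^ n := by
    intro n
    induction n with
    | zero => simp
    | succ n ih =>
      have h := hcut n
      have : P (n + 1) = P n * r := by
        rw [hr, ← mul_div_assoc, eq_div_iff hmu.ne']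
        linarith [h]
      rw [this, ih, pow_succ, mul_assoc]
  have hsumr : Summable (fun n : ℕ => P 0 * r ^ n) :=
    (summable_geometric_of_lt_one hr0 hr1).mul_left _
  have hPYval : PY = P 0 * (1 - r)⁻¹ := by
    rw [hPY]
    calc ∑' n, P n = ∑' n, P 0 * r ^ n := by exact tsum_congr hgeo
    _ = P 0 * ∑' n, r ^ n := by rw [tsum_mul_left]
    _ = P 0 * (1 - r)⁻¹ := by rw [tsum_geometric_of_lt_one hr0 hr1]
  have hP0 : P 0 ≠ 0 := by
    intro h
    rw [hPYval, h, zero_mul] at hPYpos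
    exact lt_irrefl _ hPYpos
  intro n
  rw [hgeo n, hPYval]
  have h1r : (1 : ℝ) - r ≠ 0 := by linarith
  field_simp
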